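/- Let α be an algebraic real number of degree m, α_k = p_k/q_k the k-th truncation of the Liouville constant, and γ_k = α·α_k. Then H(γ_k) ≤ H(α) · H(α_k)^m, where heights of algebraic numbers are heights of their minimal integer polynomials. -/

import Mathlib

open Polynomial Filter

/-- Primitive integer minimal polynomial of a real number. -/
noncomputable def intMin (x : ℝ) : Polynomial ℤ :=
  (IsLocalization.integerNormalization (nonZeroDivisors ℤ) (minpoly ℚ x)).primPart

/-- Height of an integer polynomial: max absolute value of its coefficients. -/
def polyHeight (P : Polynomial ℤ) : ℕ :=
  (Finset.range (P.natDegree + 1)).sup fun i => (P.coeff i).natAbs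

/-- Height of an algebraic real number. -/
noncomputable def aheight (x : ℝ) : ℕ := polyHeight (intMin x)

/-- Degree of a real number over ℚ. -/
noncomputable def adeg (x : ℝ) : ℕ := (minpoly ℚ x).natDegree

/-- Liouville constant L = ∑ 10^{-j!}, j ≥ 1. -/
noncomputable def Lconst : ℝ := ∑' j : ℕ, 1 / (10 : ℝ) ^ (Nat.factorial (j + 1))

/-- Numerator of k-th truncation of L. -/
def pk (k : ℕ) : ℤ := ∑ j ∈ Finset.range k, 10 ^ ((Nat.factorial k) - (Nat.factorial (j + 1)))

/-- Denominator of k-th truncation of L. -/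
def qk (k : ℕ) : ℤ := 10 ^ (Nat.factorial k)

/-- Set of degree-n algebraic approximants witnessing exponent w. -/
noncomputable def wSet (ξ : ℝ) (n : ℕ) (w : ℝ) : Set ℝ :=
  {γ : ℝ | IsAlgebraic ℚ γ ∧ adeg γ = n ∧ 0 < |ξ - γ| ∧
    |ξ - γ| < (aheight γ : ℝ) ^ (-w - 1)}

/-- ξ is a U_m-number: w*_m(ξ) = ∞ and w*_n(ξ) < ∞ for 1 ≤ n < m. -/
noncomputable def IsUm (ξ : ℝ) (m : ℕ) : Prop :=
  (∀ w : ℝ, (wSet ξ m w).Infinite) ∧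
    ∀ n : ℕ, 1 ≤ n → n < m → ∃ w : ℝ, (wSet ξ n w).Finite

/-- ξ is a Liouville number. -/
def IsLiouville' (x : ℝ) : Prop :=
  ∀ w : ℝ, 0 < w →
    {r : ℚ | 0 < |x - (r : ℝ)| ∧ |x - (r : ℝ)| < (r.den : ℝ) ^ (-w)}.Infinite

/-- Height of a rational number: max of |numerator| and denominator. -/
def qheight (r : ℚ) : ℕ := max r.num.natAbs r.den

lemma intMin_map_eq (x : ℝ) (hx : IsAlgebraic ℚ x) :
    ∃ c : ℚ, c ≠ 0 ∧ (intMin x).map (algebraMap ℤ ℚ) = C c * minpoly ℚ x := by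
  have hmp : minpoly ℚ x ≠ 0 := minpoly.ne_zero hx.isIntegral
  set N := IsLocalization.integerNormalization (nonZeroDivisors ℤ) (minpoly ℚ x) with hN
  obtain ⟨b, hb⟩ := IsLocalization.integerNormalization_map_to_map
    (nonZeroDivisors ℤ) (minpoly ℚ x)
  have hb0 : (b : ℤ) ≠ 0 := nonZeroDivisors.coe_ne_zero b
  have hN0 : N ≠ 0 := by
    rw [hN, Ne, IsFractionRing.integerNormalization_eq_zero_iff]; exact hmp
  have hc0 : N.content ≠ 0 := fun h => hN0 (content_eq_zero_iff.mp h)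
  have hmapN : N.map (algebraMap ℤ ℚ) = C ((b : ℤ) : ℚ) * minpoly ℚ x := by
    rw [hb]; ext i; simp [coeff_smul, zsmul_eq_mul]
  have h2 : C ((N.content : ℤ) : ℚ) * ((intMin x).map (algebraMap ℤ ℚ))
      = C ((b : ℤ) : ℚ) * minpoly ℚ x := by
    rw [← hmapN]
    conv_rhs => rw [N.eq_C_content_mul_primPart]
    rw [Polynomial.map_mul, map_C]
    rfl
  have hcQ : ((N.content : ℤ) : ℚ) ≠ 0 := Int.cast_ne_zero.mpr hc0
  refine ⟨((b : ℤ) : ℚ) / ((N.content : ℤ) : ℚ), div_ne_zero (Int.cast_ne_zero.mpr hb0) hcQ, ?_⟩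
  apply mul_left_cancel₀ (show (C ((N.content : ℤ) : ℚ)) ≠ 0 by simpa using hcQ)
  rw [h2, ← mul_assoc, ← C_mul, mul_div_cancel₀ _ hcQ]

lemma intMin_aeval (x : ℝ) (hx : IsAlgebraic ℚ x) : aeval x (intMin x) = 0 := by
  obtain ⟨c, hc, h⟩ := intMin_map_eq x hx
  have h2 : aeval x ((intMin x).map (algebraMap ℤ ℚ)) = 0 := by
    rw [h]; simp [minpoly.aeval]
  rwa [aeval_map_algebraMap] at h2

lemma intMin_natDegree (x : ℝ) (hx : IsAlgebraic ℚ x) : (intMin x).natDegree = adeg x := by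
  obtain ⟨c, hc, h⟩ := intMin_map_eq x hx
  have h1 := natDegree_map_eq_of_injective (f := algebraMap ℤ ℚ)
    (fun a b hab => by exact_mod_cast hab) (intMin x)
  rw [h, natDegree_C_mul hc] at h1
  exact h1.symm

lemma intMin_primitive (x : ℝ) : (intMin x).IsPrimitive := isPrimitive_primPart _

lemma intMin_ne_zero (x : ℝ) : intMin x ≠ 0 := primPart_ne_zero _

lemma intMin_dvd {x : ℝ} (hx : IsAlgebraic ℚ x) {Q : Polynomial ℤ}
    (hQ : aeval x Q = 0) : intMin x ∣ Q := by
  rcases eq_or_ne Q 0 with rfl | hQ0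
  · simp
  have h1 : aeval x Q.primPart = 0 := aeval_primPart_eq_zero hQ0 hQ
  refine dvd_trans ?_ (primPart_dvd Q)
  refine (intMin_primitive x).dvd_of_fraction_map_dvd_fraction_map (K := ℚ)
    ?_
  obtain ⟨c, hc, hmap⟩ := intMin_map_eq x hx
  rw [hmap]
  have hd : minpoly ℚ x ∣ Q.primPart.map (algebraMap ℤ ℚ) :=
    minpoly.dvd ℚ x (by rw [aeval_map_algebraMap]; exact h1)
  have hu : IsUnit (C c) := isUnit_C.mpr hc.isUnit
  rw [mul_comm]; exact (hu.mul_right_dvd).mpr hd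

lemma polyHeight_mono_coeff {P Q : Polynomial ℤ} (hd : P.natDegree = Q.natDegree)
    (h : ∀ i, (P.coeff i).natAbs ≤ (Q.coeff i).natAbs) : polyHeight P ≤ polyHeight Q := by
  unfold polyHeight
  rw [hd]
  exact Finset.sup_mono_fun fun i _ => h i

lemma dvd_decomp {P Q : Polynomial ℤ} (hQ : Q ≠ 0) (hdvd : P ∣ Q)
    (hdeg : Q.natDegree ≤ P.natDegree) :
    ∃ s : ℤ, s ≠ 0 ∧ Q = P * C s := by
  obtain ⟨S, rfl⟩ := hdvd
  have hP : P ≠ 0 := left_ne_zero_of_mul hQ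
  have hS : S ≠ 0 := right_ne_zero_of_mul hQ
  have hmul := natDegree_mul hP hS
  have hdS : S.natDegree = 0 := by omega
  obtain ⟨s, rfl⟩ := natDegree_eq_zero.mp hdS
  refine ⟨s, ?_, rfl⟩
  rintro rfl
  simp at hS

lemma polyHeight_le_of_dvd {P Q : Polynomial ℤ} (hQ : Q ≠ 0) (hdvd : P ∣ Q)
    (hdeg : Q.natDegree ≤ P.natDegree) : polyHeight P ≤ polyHeight Q := by
  obtain ⟨s, hs, rfl⟩ := dvd_decomp hQ hdvd hdeg
  have hP : P ≠ 0 := left_ne_zero_of_mul hQ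
  apply polyHeight_mono_coeff
  · rw [natDegree_mul hP (by simpa using hs), natDegree_C, Nat.add_zero]
  · intro i
    rw [coeff_mul_C, Int.natAbs_mul]
    exact Nat.le_mul_of_pos_right _ (Int.natAbs_pos.mpr hs)

lemma polyHeight_eq_of_dvd_primitive {P Q : Polynomial ℤ} (hQ : Q.IsPrimitive) (hQ0 : Q ≠ 0)
    (hdvd : P ∣ Q) (hdeg : Q.natDegree ≤ P.natDegree) : polyHeight Q ≤ polyHeight P := by
  obtain ⟨s, hs, hQeq⟩ := dvd_decomp hQ0 hdvd hdeg
  have hP : P ≠ 0 := left_ne_zero_of_mul (hQeq ▸ hQ0)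
  have hsu : IsUnit s := hQ s (by rw [hQeq]; exact Dvd.intro_left P rfl)
  have hs1 : s.natAbs = 1 := Int.isUnit_iff.mp hsu |>.elim (fun h => by simp [h]) (fun h => by simp [h])
  apply polyHeight_mono_coeff
  · rw [hQeq, natDegree_mul hP (by simpa using hs), natDegree_C, Nat.add_zero]
  · intro i
    rw [hQeq, coeff_mul_C, Int.natAbs_mul, hs1, mul_one]

lemma geom_sum_le (n : ℕ) : (∑ e ∈ Finset.range n, (10 : ℤ) ^ e) ≤ 10 ^ n := by
  induction n with
  | zero => simp
  | succ n ih =>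
    rw [Finset.sum_range_succ, pow_succ]
    have h10 : (0:ℤ) < 10 ^ n := by positivity
    nlinarith

lemma pk_pos {k : ℕ} (hk : 1 ≤ k) : 0 < pk k := by
  unfold pk
  apply Finset.sum_pos (fun j _ => by positivity)
  exact ⟨0, Finset.mem_range.mpr hk⟩

lemma pk_le_qk (k : ℕ) : pk k ≤ qk k := by
  unfold pk qk
  have hkk : k ≤ Nat.factorial k := Nat.self_le_factorial k
  calc ∑ j ∈ Finset.range k, (10:ℤ) ^ (Nat.factorial k - Nat.factorial (j+1))
      ≤ ∑ j ∈ Finset.range k, (10:ℤ) ^ (Nat.factorial k - 1 - j) := by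
        apply Finset.sum_le_sum
        intro j hj
        apply pow_le_pow_right₀ (by norm_num)
        have h1 : j + 1 ≤ Nat.factorial (j + 1) := Nat.self_le_factorial _
        omega
    _ ≤ ∑ j ∈ Finset.range (Nat.factorial k), (10:ℤ) ^ (Nat.factorial k - 1 - j) := by
        apply Finset.sum_le_sum_of_subset_of_nonneg
        · exact Finset.range_subset_range.mpr hkk
        · intro i _ _; positivity
    _ = ∑ j ∈ Finset.range (Nat.factorial k), (10:ℤ) ^ j := by
        exact Finset.sum_range_reflect (fun j => (10:ℤ) ^ j) _
    _ ≤ 10 ^ Nat.factorial k := geom_sum_le _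

lemma pk_coprime {k : ℕ} (hk : 1 ≤ k) : IsCoprime (pk k) (qk k) := by
  have h10 : ∃ t : ℤ, pk k = 10 * t + 1 := by
    obtain ⟨k', rfl⟩ : ∃ k', k = k' + 1 := ⟨k - 1, by omega⟩
    refine ⟨∑ j ∈ Finset.range k', 10 ^ (Nat.factorial (k'+1) - Nat.factorial (j+1) - 1), ?_⟩
    unfold pk
    rw [Finset.sum_range_succ, Nat.sub_self, pow_zero, Finset.mul_sum]
    congr 1
    apply Finset.sum_congr rfl
    intro j hj
    have hj' : j + 1 < k' + 1 := Finset.mem_range.mp hj |>.trans_le (le_refl _) |> Nat.succ_lt_succ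
    have hlt : Nat.factorial (j+1) < Nat.factorial (k'+1) :=
      (Nat.factorial_lt (Nat.succ_pos j)).mpr hj'
    have h1 : 1 ≤ Nat.factorial (k'+1) - Nat.factorial (j+1) := by omega
    rw [← pow_succ']
    congr 1
    omega
  obtain ⟨t, ht⟩ := h10
  have h1 : IsCoprime (pk k) (10 : ℤ) := ⟨1, -t, by rw [ht]; ring⟩
  exact h1.pow_right

lemma coeff_le_polyHeight (P : Polynomial ℤ) (i : ℕ) : (P.coeff i).natAbs ≤ polyHeight P := by
  by_cases hi : i ≤ P.natDegree
  · exact Finset.le_sup (f := fun i => (P.coeff i).natAbs) (Finset.mem_range.mpr (by omega))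
  · rw [coeff_eq_zero_of_natDegree_lt (by omega)]; simp

lemma qk_le_aheight {k : ℕ} (hk : 1 ≤ k) :
    (qk k).natAbs ≤ aheight ((pk k : ℝ) / (qk k : ℝ)) := by
  have hqZ : qk k ≠ 0 := by unfold qk; positivity
  have hp0 : pk k ≠ 0 := (pk_pos hk).ne'
  set x : ℝ := (pk k : ℝ) / (qk k : ℝ) with hxdef
  have hq0 : (qk k : ℝ) ≠ 0 := Int.cast_ne_zero.mpr hqZ
  have hxρ : x = (((pk k : ℚ) / (qk k : ℚ) : ℚ) : ℝ) := by rw [hxdef]; push_cast; rfl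
  have hxalg : IsAlgebraic ℚ x := by
    rw [hxρ, ← eq_ratCast (algebraMap ℚ ℝ) ((pk k : ℚ) / (qk k : ℚ))]
    exact isAlgebraic_algebraMap _
  have hadeg : adeg x = 1 := by
    unfold adeg
    rw [hxρ, ← eq_ratCast (algebraMap ℚ ℝ) ((pk k : ℚ) / (qk k : ℚ)),
      minpoly.eq_X_sub_C, natDegree_X_sub_C]
  set g : Polynomial ℤ := C (qk k) * X + C (-(pk k)) with hg
  have hgdeg : g.natDegree = 1 := natDegree_linear hqZ
  have hgcoeff1 : g.coeff 1 = qk k := by rw [hg, coeff_add, coeff_C_mul, coeff_X_one, coeff_C]; simp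
  have hgcoeff0 : g.coeff 0 = -(pk k) := by rw [hg, coeff_add, coeff_C_mul, coeff_X_zero, coeff_C]; simp
  have hgne : g ≠ 0 := fun h => hqZ (by rw [← hgcoeff1, h]; simp)
  have hgeval : aeval x g = 0 := by
    rw [hg]
    simp only [map_add, map_mul, aeval_C, aeval_X, algebraMap_int_eq, eq_intCast, map_intCast, map_neg]
    rw [hxdef]
    push_cast
    field_simp
    ring
  have hgprim : g.IsPrimitive := by
    intro r hr
    rw [C_dvd_iff_dvd_coeff] at hr
    have h1 := hr 1
    have h0 := hr 0
    rw [hgcoeff1] at h1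
    rw [hgcoeff0] at h0
    exact (pk_coprime hk).isUnit_of_dvd' ((dvd_neg).mp h0) h1
  have hMdeg : (intMin x).natDegree = 1 := (intMin_natDegree x hxalg).trans hadeg
  have hdvd : intMin x ∣ g := intMin_dvd hxalg hgeval
  have hle : polyHeight g ≤ polyHeight (intMin x) :=
    polyHeight_eq_of_dvd_primitive hgprim hgne hdvd (by rw [hgdeg, hMdeg])
  calc (qk k).natAbs = (g.coeff 1).natAbs := by rw [hgcoeff1]
    _ ≤ polyHeight g := coeff_le_polyHeight g 1
    _ ≤ polyHeight (intMin x) := hle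

theorem stmt8 (α : ℝ) (hα : IsAlgebraic ℚ α) (m : ℕ) (hm : adeg α = m)
    (k : ℕ) (hk : 1 ≤ k) :
    aheight (α * ((pk k : ℝ) / (qk k : ℝ))) ≤
      aheight α * aheight ((pk k : ℝ) / (qk k : ℝ)) ^ m := by
  classical
  have hqZ : qk k ≠ 0 := by unfold qk; positivity
  have hp0 : pk k ≠ 0 := (pk_pos hk).ne'
  have hq0 : (qk k : ℝ) ≠ 0 := Int.cast_ne_zero.mpr hqZ
  set x : ℝ := (pk k : ℝ) / (qk k : ℝ) with hxdef
  have hxρ : x = (((pk k : ℚ) / (qk k : ℚ) : ℚ) : ℝ) := by rw [hxdef]; push_cast; rfl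
  have hxalg : IsAlgebraic ℚ x := by
    rw [hxρ, ← eq_ratCast (algebraMap ℚ ℝ) ((pk k : ℚ) / (qk k : ℚ))]
    exact isAlgebraic_algebraMap _
  set γ : ℝ := α * x with hγdef
  have hγalg : IsAlgebraic ℚ γ := (hα.isIntegral.mul hxalg.isIntegral).isAlgebraic
  set P : Polynomial ℤ := intMin α with hP
  have hPdeg : P.natDegree = m := (intMin_natDegree α hα).trans hm
  have hPne : P ≠ 0 := intMin_ne_zero α
  set Q : Polynomial ℤ :=
    ∑ i ∈ Finset.range (m + 1), monomial i (P.coeff i * pk k ^ (m - i) * qk k ^ i) with hQ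
  have hQcoeff : ∀ n, Q.coeff n =
      if n ≤ m then P.coeff n * pk k ^ (m - n) * qk k ^ n else 0 := by
    intro n
    rw [hQ, finset_sum_coeff]
    simp only [coeff_monomial]
    rw [Finset.sum_ite_eq' (Finset.range (m + 1)) n]
    simp [Nat.lt_succ_iff]
  have hQm : Q.coeff m = P.coeff m * qk k ^ m := by
    rw [hQcoeff]; simp
  have hPm : P.coeff m ≠ 0 := by
    rw [← hPdeg]; exact leadingCoeff_ne_zero.mpr hPne
  have hQmne : Q.coeff m ≠ 0 := by
    rw [hQm]; exact mul_ne_zero hPm (pow_ne_zero _ hqZ)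
  have hQne : Q ≠ 0 := fun h => hQmne (by rw [h]; simp)
  have hQdeg : Q.natDegree = m := by
    apply le_antisymm
    · rw [natDegree_le_iff_coeff_eq_zero]
      intro j hj
      rw [hQcoeff, if_neg (by omega)]
    · exact le_natDegree_of_ne_zero hQmne
  have haevalP : aeval α P = 0 := intMin_aeval α hα
  have hQeval : aeval γ Q = 0 := by
    rw [hQ, map_sum]
    have hterm : ∀ i ∈ Finset.range (m + 1),
        (aeval γ) (monomial i (P.coeff i * pk k ^ (m - i) * qk k ^ i)) =
          ((pk k : ℝ)) ^ m * ((P.coeff i : ℝ) * α ^ i) := by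
      intro i hi
      have him : i ≤ m := Nat.lt_succ_iff.mp (Finset.mem_range.mp hi)
      rw [aeval_monomial, hγdef, hxdef]
      have hsplit : ((pk k : ℝ)) ^ (m - i) * ((pk k : ℝ)) ^ i = (pk k : ℝ) ^ m := by
        rw [← pow_add]; congr 1; omega
      push_cast
      rw [mul_pow, div_pow]
      field_simp
      linear_combination ((P.coeff i : ℝ) * α ^ i * ((qk k : ℝ)) ^ i) * hsplit
    rw [Finset.sum_congr rfl hterm, ← Finset.mul_sum]
    have hsum : ∑ i ∈ Finset.range (m + 1), ((P.coeff i : ℝ) * α ^ i) = aeval α P := by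
      rw [aeval_eq_sum_range, hPdeg]
      exact (Finset.sum_congr rfl fun i _ => by rw [zsmul_eq_mul]).symm
    rw [hsum, haevalP, mul_zero]
  have hγdeg : adeg γ = m := by
    apply le_antisymm
    · have hdvd : minpoly ℚ γ ∣ Q.map (algebraMap ℤ ℚ) :=
        minpoly.dvd ℚ γ (by rw [aeval_map_algebraMap]; exact hQeval)
      have hQmapne : Q.map (algebraMap ℤ ℚ) ≠ 0 :=
        (Polynomial.map_ne_zero_iff (fun a b hab => by exact_mod_cast hab)).mpr hQne
      have hle := natDegree_le_of_dvd hdvd hQmapne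
      rwa [natDegree_map_eq_of_injective (fun a b hab => by exact_mod_cast hab) Q, hQdeg] at hle
    · set g := minpoly ℚ γ with hgdef
      have hgne : g ≠ 0 := minpoly.ne_zero hγalg.isIntegral
      set ρ : ℚ := (pk k : ℚ) / (qk k : ℚ) with hρ
      have hρ0 : ρ ≠ 0 :=
        div_ne_zero (Int.cast_ne_zero.mpr hp0) (Int.cast_ne_zero.mpr hqZ)
      have hcomp_ne : g.comp (C ρ * X) ≠ 0 := by
        rw [Ne, comp_eq_zero_iff]
        push_neg
        refine ⟨hgne, fun _ => ?_⟩
        intro heq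
        apply hρ0
        have := congrArg (fun p => Polynomial.coeff p 1) heq
        simpa using this
      have haeval_h : aeval α (g.comp (C ρ * X)) = 0 := by
        rw [aeval_comp]
        have hval : aeval α (C ρ * X) = γ := by
          rw [map_mul, aeval_C, aeval_X, eq_ratCast (algebraMap ℚ ℝ) ρ, hγdef, hxρ, hρ]
          ring
        rw [hval, hgdef]
        exact minpoly.aeval ℚ γ
      have hdvd2 : minpoly ℚ α ∣ g.comp (C ρ * X) := minpoly.dvd ℚ α haeval_h
      have hle := natDegree_le_of_dvd hdvd2 hcomp_ne
      rw [natDegree_comp, natDegree_C_mul hρ0, natDegree_X, mul_one] at hle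
      calc m = adeg α := hm.symm
        _ ≤ g.natDegree := hle
  have hMdeg : (intMin γ).natDegree = m := (intMin_natDegree γ hγalg).trans hγdeg
  have step1 : aheight γ ≤ polyHeight Q :=
    polyHeight_le_of_dvd hQne (intMin_dvd hγalg hQeval) (by rw [hQdeg, hMdeg])
  have hpq_abs : (pk k).natAbs ≤ (qk k).natAbs := by
    have h1 := pk_le_qk k
    have h2 := pk_pos hk
    omega
  have step2 : polyHeight Q ≤ polyHeight P * (qk k).natAbs ^ m := by
    apply Finset.sup_le
    intro i _
    rw [hQcoeff]
    by_cases him : i ≤ m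
    · rw [if_pos him, Int.natAbs_mul, Int.natAbs_mul, Int.natAbs_pow, Int.natAbs_pow]
      calc (P.coeff i).natAbs * (pk k).natAbs ^ (m - i) * (qk k).natAbs ^ i
          ≤ polyHeight P * (qk k).natAbs ^ (m - i) * (qk k).natAbs ^ i :=
            Nat.mul_le_mul_right _
              (Nat.mul_le_mul (coeff_le_polyHeight P i) (Nat.pow_le_pow_left hpq_abs _))
        _ = polyHeight P * (qk k).natAbs ^ m := by
            rw [mul_assoc, ← pow_add]
            congr 2
            omega
    · rw [if_neg him]; simp
  calc aheight γ ≤ polyHeight Q := step1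
    _ ≤ polyHeight P * (qk k).natAbs ^ m := step2
    _ ≤ aheight α * aheight x ^ m :=
        Nat.mul_le_mul (le_of_eq rfl) (Nat.pow_le_pow_left (qk_le_aheight hk) m)
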